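/- Let E be a topological graph, Y a closed subset of E^0_rg, and E_Y the associated topological graph. For every continuous function h : E_Y^0 → ℂ vanishing at infinity, there exist continuous functions f, g : E^0 → ℂ vanishing at infinity such that g vanishes on E^0 \ E^0_rg, h(v) = f(v) + g(v) for all v ∈ E^0 ⊆ E_Y^0, and h(ω(v)) = f(v) for all v ∈ Y. -/

import Mathlib

open Set Filter OnePoint

namespace TopGraphAux

/-- `E⁰_sce`: the open set of sources of a topological graph. -/
def graphSce {E0 E1 : Type*} [TopologicalSpace E0] (r : E1 → E0) : Set E0 :=
  (closure (Set.range r))ᶜ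

/-- `E⁰_fin`: vertices having a neighborhood whose `r`-preimage is compact. -/
def graphFin {E0 E1 : Type*} [TopologicalSpace E0] [TopologicalSpace E1] (r : E1 → E0) :
    Set E0 :=
  {v | ∃ V ∈ nhds v, IsCompact (r ⁻¹' V)}

/-- `E⁰_rg`: the open set of regular vertices of a topological graph. -/
def graphRg {E0 E1 : Type*} [TopologicalSpace E0] [TopologicalSpace E1] (r : E1 → E0) :
    Set E0 :=
  graphFin r \ closure (graphSce r)

/-- A factor map from the topological graph `F = (F0, F1, dF, rF)` to the topological graph
`E = (E0, E1, dE, rE)`: a pair of continuous maps between one-point compactifications sending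
`∞` to `∞`, intertwining range and domain maps, and with the unique edge-lifting property. -/
structure IsFactorMap {E0 E1 F0 F1 : Type*}
    [TopologicalSpace E0] [TopologicalSpace E1] [TopologicalSpace F0] [TopologicalSpace F1]
    (dE rE : E1 → E0) (dF rF : F1 → F0)
    (m0 : OnePoint F0 → OnePoint E0) (m1 : OnePoint F1 → OnePoint E1) : Prop where
  continuous_m0 : Continuous m0
  continuous_m1 : Continuous m1
  map_infty0 : m0 ∞ = ∞
  map_infty1 : m1 ∞ = ∞
  compat : ∀ (e : F1) (e' : E1), m1 ↑e = ↑e' →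
    (↑(rE e') : OnePoint E0) = m0 ↑(rF e) ∧ (↑(dE e') : OnePoint E0) = m0 ↑(dF e)
  lift : ∀ (e' : E1) (v : F0), (↑(dE e') : OnePoint E0) = m0 ↑v →
    ∃! e : F1, m1 ↑e = (↑e' : OnePoint E1) ∧ dF e = v

/-- Regularity of a factor map: every vertex mapping to a regular vertex receives an edge,
and all edges it receives are mapped to genuine edges. -/
def IsRegularFactorMap {E0 E1 F0 F1 : Type*}
    [TopologicalSpace E0] [TopologicalSpace E1] [TopologicalSpace F0] [TopologicalSpace F1]
    (rE : E1 → E0) (rF : F1 → F0)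
    (m0 : OnePoint F0 → OnePoint E0) (m1 : OnePoint F1 → OnePoint E1) : Prop :=
  ∀ (v : F0) (w : E0), m0 ↑v = ↑w → w ∈ graphRg rE →
    (∃ e : F1, rF e = v) ∧ ∀ e : F1, rF e = v → ∃ e' : E1, m1 ↑e = ↑e'

/-- `f` restricts to a homeomorphism from `U` onto `V`. -/
def IsHomeoOn {X Y : Type*} [TopologicalSpace X] [TopologicalSpace Y]
    (f : X → Y) (U : Set X) (V : Set Y) : Prop :=
  ∃ h : U ≃ₜ V, ∀ x : U, (h x : Y) = f (x : X)

/-- Extension of a map `A → OnePoint B` to the one-point compactification, sending `∞` to `∞`. -/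
def onePointLift {A B : Type*} (f : A → OnePoint B) : OnePoint A → OnePoint B :=
  fun x => Option.elim x ∞ f

/-- The relation identifying the copy in `S` of each point of `B ⊆ S` with the corresponding
point of `X`. -/
def glueRel {X : Type*} (S B : Set X) : (X ⊕ ↥S) → (X ⊕ ↥S) → Prop :=
  fun a b => ∃ x : ↥S, (x : X) ∈ B ∧
    ((a = Sum.inl ↑x ∧ b = Sum.inr x) ∨ (a = Sum.inr x ∧ b = Sum.inl ↑x))

/-- The space `X ⨿_B S` obtained from `X ⊔ S` by identifying the two copies of each point
of `B ⊆ S ⊆ X`. -/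
def Glue (X : Type*) (S B : Set X) : Type _ := Quot (glueRel S B)

instance {X : Type*} [TopologicalSpace X] (S B : Set X) : TopologicalSpace (Glue X S B) :=
  inferInstanceAs (TopologicalSpace (Quot _))

/-- The canonical inclusion `X → X ⨿_B S`. -/
def Glue.inl {X : Type*} {S B : Set X} (x : X) : Glue X S B := Quot.mk _ (Sum.inl x)

/-- The inclusion of the extra copy `S → X ⨿_B S`. -/
def Glue.inr {X : Type*} {S B : Set X} (x : ↥S) : Glue X S B := Quot.mk _ (Sum.inr x)

/-- The extension `d_Y` of the domain map `d` to the graph `E_Y`. -/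
def glueD {E0 E1 : Type*} [TopologicalSpace E0] (d : E1 → E0) (Y : Set E0) :
    Glue E1 (d ⁻¹' closure Y) (d ⁻¹' (closure Y \ Y)) → Glue E0 (closure Y) (closure Y \ Y) :=
  Quot.lift
    (Sum.elim (fun e => Glue.inl (d e)) (fun e => Glue.inr ⟨d e.1, e.2⟩))
    (by
      rintro a b ⟨x, hx, (⟨rfl, rfl⟩ | ⟨rfl, rfl⟩)⟩
      · exact Quot.sound ⟨⟨d x.1, x.2⟩, hx, Or.inl ⟨rfl, rfl⟩⟩
      · exact (Quot.sound ⟨⟨d x.1, x.2⟩, hx, Or.inl ⟨rfl, rfl⟩⟩).symm)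

/-- The extension `r_Y` of the range map `r` to the graph `E_Y`. -/
def glueR {E0 E1 : Type*} [TopologicalSpace E0] (d r : E1 → E0) (Y : Set E0) :
    Glue E1 (d ⁻¹' closure Y) (d ⁻¹' (closure Y \ Y)) → Glue E0 (closure Y) (closure Y \ Y) :=
  Quot.lift (Sum.elim (fun e => Glue.inl (r e)) (fun e => Glue.inl (r e.1)))
    (by rintro a b ⟨x, hx, (⟨rfl, rfl⟩ | ⟨rfl, rfl⟩)⟩ <;> rfl)

/-- The projection from the glued space back onto the original space. -/
def glueProj {X : Type*} (S B : Set X) : Glue X S B → X :=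
  Quot.lift (Sum.elim id Subtype.val)
    (by rintro a b ⟨x, hx, (⟨rfl, rfl⟩ | ⟨rfl, rfl⟩)⟩ <;> rfl)

/-- A point of the projective limit `E^i = Ẽ^i \ {∞}`: a compatible thread of points of the
one-point compactifications, not all equal to `∞`. -/
structure LimPt {Λ : Type*} [Preorder Λ] (X : Λ → Type*)
    (m : ∀ ⦃l l' : Λ⦄, l ≤ l' → OnePoint (X l') → OnePoint (X l)) where
  pt : ∀ l, OnePoint (X l)
  compat : ∀ ⦃l l' : Λ⦄ (h : l ≤ l'), m h (pt l') = pt l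
  exists_ne_infty : ∃ l, pt l ≠ ∞

instance {Λ : Type*} [Preorder Λ] (X : Λ → Type*) [∀ l, TopologicalSpace (X l)]
    (m : ∀ ⦃l l' : Λ⦄, l ≤ l' → OnePoint (X l') → OnePoint (X l)) :
    TopologicalSpace (LimPt X m) :=
  TopologicalSpace.induced LimPt.pt inferInstance

/-- Topological freeness: the set of base points of loops without entrances has empty
interior. -/
def IsTopologicallyFree {E0 E1 : Type*} [TopologicalSpace E0] (d r : E1 → E0) : Prop :=
  interior {v : E0 | ∃ (n : ℕ) (hn : 0 < n) (e : Fin n → E1),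
      (∀ k : Fin n, d (e k) = r (e ⟨(k.1 + 1) % n, Nat.mod_lt _ hn⟩)) ∧
      (∀ (k : Fin n) (e' : E1), r e' = r (e k) → e' = e k) ∧
      r (e ⟨0, hn⟩) = v} = ∅

open scoped Classical in
/-- Partial iteration of a partially defined map `σ` with domain `W`:
`sgdsIter σ n x = some y` iff `x ∈ dom (σ^n)` and `σ^n x = y`. -/
noncomputable def sgdsIter {X : Type*} {W : Set X} (σ : ↥W → X) : ℕ → X → Option X
  | 0, x => Option.some x
  | n + 1, x => if h : x ∈ W then sgdsIter σ n (σ ⟨x, h⟩) else none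



/-- Pasting lemma: continuity on a union of two closed sets. -/
theorem continuousOn_union_of_isClosed' {X Z : Type*} [TopologicalSpace X] [TopologicalSpace Z]
    {s t : Set X} {f : X → Z} (hs : IsClosed s) (ht : IsClosed t)
    (h1 : ContinuousOn f s) (h2 : ContinuousOn f t) : ContinuousOn f (s ∪ t) := by
  intro x hx
  have key : ∀ (u : Set X), IsClosed u → ContinuousOn f u → ContinuousWithinAt f u x := by
    intro u hu hfu
    by_cases hxu : x ∈ u
    · exact hfu x hxu
    · have hb : nhdsWithin x u = ⊥ := by
        rw [← Filter.not_neBot, ← mem_closure_iff_nhdsWithin_neBot, hu.closure_eq]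
        exact hxu
      rw [ContinuousWithinAt, hb]
      exact tendsto_bot
  exact (key s hs h1).union (key t ht h2)

/-- Continuity on the range of an embedding from continuity of the composition. -/
theorem continuousOn_range_of_isEmbedding' {A X Z : Type*} [TopologicalSpace A]
    [TopologicalSpace X] [TopologicalSpace Z] {e : A → X} (he : Topology.IsEmbedding e)
    {f : X → Z} (h : Continuous (f ∘ e)) : ContinuousOn f (Set.range e) := by
  rintro _ ⟨a, rfl⟩
  rw [ContinuousWithinAt, ← he.map_nhds_eq a, Filter.tendsto_map'_iff]
  exact h.continuousAt

/-- A map with a continuous retraction is cocompact-tendsto. -/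
theorem tendsto_cocompact_of_retract' {α β : Type*} [TopologicalSpace α] [TopologicalSpace β]
    {q : α → β} {p : β → α} (hp : Continuous p) (hqp : ∀ x, p (q x) = x) :
    Filter.Tendsto q (Filter.cocompact α) (Filter.cocompact β) := by
  rw [Filter.hasBasis_cocompact.tendsto_right_iff]
  intro K hK
  have hmem : (p '' K)ᶜ ∈ Filter.cocompact α :=
    Filter.mem_cocompact.2 ⟨p '' K, hK.image hp, subset_rfl⟩
  filter_upwards [hmem] with x hx hxK
  exact hx ⟨q x, hxK, hqp x⟩

open scoped Classical in
/-- The prescribed boundary values for the Tietze extension, as a function on the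
one-point compactification. -/
noncomputable def phiAux {E0 : Type*} [TopologicalSpace E0] (Y : Set E0)
    (h : Glue E0 (closure Y) (closure Y \ Y) → ℂ) : OnePoint E0 → ℂ :=
  fun x => x.elim 0
    (fun v => if hv : v ∈ closure Y then h (Glue.inl v) - h (Glue.inr ⟨v, hv⟩) else 0)

/-- For a topological graph `E`, a closed subset `Y` of `E⁰_rg`, and a
continuous function `h : E_Y⁰ → ℂ` vanishing at infinity, there are continuous functions
`f, g : E⁰ → ℂ` vanishing at infinity such that `g` vanishes outside `E⁰_rg`,
`h(v) = f(v) + g(v)` for `v ∈ E⁰` and `h(ω(v)) = f(v)` for `v ∈ Y`. -/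
theorem statement8
    {E0 E1 : Type*} [TopologicalSpace E0] [TopologicalSpace E1]
    [T2Space E0] [T2Space E1] [LocallyCompactSpace E0] [LocallyCompactSpace E1]
    (d r : E1 → E0) (hd : IsLocalHomeomorph d) (hr : Continuous r)
    (Y : Set E0) (hY : Y ⊆ graphRg r) (hYc : closure Y ∩ graphRg r = Y)
    (h : Glue E0 (closure Y) (closure Y \ Y) → ℂ)
    (hcont : Continuous h)
    (hinf : Filter.Tendsto h (Filter.cocompact (Glue E0 (closure Y) (closure Y \ Y))) (nhds 0)) :
    ∃ f g : E0 → ℂ, Continuous f ∧ Continuous g ∧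
      Filter.Tendsto f (Filter.cocompact E0) (nhds 0) ∧
      Filter.Tendsto g (Filter.cocompact E0) (nhds 0) ∧
      (∀ v : E0, v ∉ graphRg r → g v = 0) ∧
      (∀ v : E0, h (Glue.inl v) = f v + g v) ∧
      (∀ (v : E0) (hv : v ∈ Y), h (Glue.inr ⟨v, subset_closure hv⟩) = f v) := by
  classical
  -- basic continuity facts about the glued graph
  have hprojC : Continuous (glueProj (X := E0) (closure Y) (closure Y \ Y)) :=
    continuous_quot_lift _ (continuous_id.sumElim continuous_subtype_val)
  have hinlC : Continuous fun v : E0 => h (Glue.inl v) :=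
    hcont.comp (continuous_quot_mk.comp continuous_inl)
  have hinrC : Continuous fun x : ↥(closure Y) => h (Glue.inr x) :=
    hcont.comp (continuous_quot_mk.comp continuous_inr)
  have hvalCE : Topology.IsClosedEmbedding (Subtype.val : ↥(closure Y) → E0) :=
    Topology.IsClosedEmbedding.subtypeVal isClosed_closure
  have hinl0 : Filter.Tendsto (fun v : E0 => h (Glue.inl v)) (Filter.cocompact E0) (nhds 0) :=
    hinf.comp (tendsto_cocompact_of_retract' hprojC (fun _ => rfl))
  have hval0 : Filter.Tendsto (Subtype.val : ↥(closure Y) → E0)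
      (Filter.cocompact _) (Filter.cocompact E0) := by
    rw [Filter.hasBasis_cocompact.tendsto_right_iff]
    intro K hK
    have hcomp : IsCompact ((Subtype.val : ↥(closure Y) → E0) ⁻¹' K) :=
      hvalCE.isCompact_preimage hK
    have hmem : ((Subtype.val : ↥(closure Y) → E0) ⁻¹' K)ᶜ ∈ Filter.cocompact _ :=
      Filter.mem_cocompact.2 ⟨_, hcomp, subset_rfl⟩
    filter_upwards [hmem] with x hx
    exact hx
  have hinr0 : Filter.Tendsto (fun x : ↥(closure Y) => h (Glue.inr x))
      (Filter.cocompact _) (nhds 0) := by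
    refine hinf.comp ?_
    rw [Filter.hasBasis_cocompact.tendsto_right_iff]
    intro K hK
    have hcomp : IsCompact ((Subtype.val : ↥(closure Y) → E0) ⁻¹'
        (glueProj (closure Y) (closure Y \ Y) '' K)) :=
      hvalCE.isCompact_preimage (hK.image hprojC)
    have hmem : ((Subtype.val : ↥(closure Y) → E0) ⁻¹'
        (glueProj (closure Y) (closure Y \ Y) '' K))ᶜ ∈ Filter.cocompact _ :=
      Filter.mem_cocompact.2 ⟨_, hcomp, subset_rfl⟩
    filter_upwards [hmem] with x hx hxK
    exact hx ⟨Glue.inr x, hxK, rfl⟩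
  -- boundary identification
  have hbound : ∀ (v : E0) (hv : v ∈ closure Y), v ∉ Y →
      (Glue.inl v : Glue E0 (closure Y) (closure Y \ Y)) = Glue.inr ⟨v, hv⟩ :=
    fun v hv hnv => Quot.sound ⟨⟨v, hv⟩, ⟨hv, hnv⟩, Or.inl ⟨rfl, rfl⟩⟩
  -- the set of regular vertices is open
  have hRgOpen : IsOpen (graphRg (E1 := E1) r) := by
    have hfin : IsOpen (graphFin (E1 := E1) r) := by
      rw [isOpen_iff_mem_nhds]
      rintro v ⟨V, hV, hc⟩
      refine Filter.mem_of_superset (interior_mem_nhds.mpr hV) ?_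
      intro w hw
      exact ⟨V, Filter.mem_of_superset (isOpen_interior.mem_nhds hw) interior_subset, hc⟩
    exact hfin.sdiff isClosed_closure
  -- the function γ on the extra copy
  set γ : ↥(closure Y) → ℂ := fun x => h (Glue.inl ↑x) - h (Glue.inr x) with hγdef
  have hγC : Continuous γ := (hinlC.comp continuous_subtype_val).sub hinrC
  have hγ0 : Filter.Tendsto γ (Filter.cocompact _) (nhds 0) := by
    have := (hinl0.comp hval0).sub hinr0
    simpa using this
  -- value of phiAux outside the regular set
  have hΦzero : ∀ v : E0, v ∉ graphRg (E1 := E1) r → phiAux Y h ↑v = 0 := by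
    intro v hv
    by_cases hvc : v ∈ closure Y
    · have hvy : v ∉ Y := fun hy => hv (hY hy)
      simp [phiAux, dif_pos hvc, hbound v hvc hvy]
    · simp [phiAux, dif_neg hvc]
  -- the embedding of OnePoint (closure Y) into OnePoint E0
  set e : OnePoint ↥(closure Y) → OnePoint E0 := OnePoint.map Subtype.val with hedef
  have heC : Continuous e := by
    refine OnePoint.continuous_map continuous_subtype_val ?_
    rw [Filter.coclosedCompact_eq_cocompact, Filter.coclosedCompact_eq_cocompact]
    exact hval0
  have heInj : Function.Injective e := Option.map_injective Subtype.val_injective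
  have heCE : Topology.IsClosedEmbedding e := heC.isClosedEmbedding heInj
  have hrange_e : Set.range e =
      ({∞} ∪ ((↑) : E0 → OnePoint E0) '' closure Y : Set (OnePoint E0)) := by
    ext x
    constructor
    · rintro ⟨a, rfl⟩
      cases a with
      | infty => exact Or.inl rfl
      | coe y => exact Or.inr ⟨↑y, y.2, rfl⟩
    · rintro (hx | ⟨v, hv, rfl⟩)
      · exact ⟨∞, hx.symm⟩
      · exact ⟨((⟨v, hv⟩ : ↥(closure Y)) : OnePoint ↥(closure Y)), rfl⟩
  -- phiAux ∘ e is continuous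
  have hcomp_eq : (fun x : ↥(closure Y) => (phiAux Y h ∘ e) ↑x) = γ := by
    funext x
    simp [phiAux, hedef, γ, dif_pos x.2]
  have hΦe : Continuous (phiAux Y h ∘ e) := by
    rw [OnePoint.continuous_iff]
    constructor
    · have hinfty : (phiAux Y h ∘ e) ∞ = 0 := by simp [phiAux, hedef]
      rw [hinfty, Filter.coclosedCompact_eq_cocompact]
      exact hcomp_eq ▸ hγ0
    · exact hcomp_eq ▸ hγC
  -- the two closed pieces
  set s₁ : Set (OnePoint E0) := {∞} ∪ ((↑) : E0 → OnePoint E0) '' closure Y with hs₁def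
  set s₂ : Set (OnePoint E0) := {∞} ∪ ((↑) : E0 → OnePoint E0) '' (graphRg (E1 := E1) r)ᶜ
    with hs₂def
  have hs1cl : IsClosed s₁ := hrange_e ▸ heCE.isClosed_range
  have hs2cl : IsClosed s₂ := by
    rw [OnePoint.isClosed_iff_of_mem (Or.inl rfl)]
    have hpre : (((↑) : E0 → OnePoint E0) ⁻¹' s₂) = (graphRg (E1 := E1) r)ᶜ := by
      ext v
      simp [hs₂def, OnePoint.coe_eq_coe, OnePoint.coe_ne_infty]
    rw [hpre]
    exact hRgOpen.isClosed_compl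
  have hΦs1 : ContinuousOn (phiAux Y h) s₁ :=
    hrange_e ▸ continuousOn_range_of_isEmbedding' heCE.toIsEmbedding hΦe
  have hΦs2 : ContinuousOn (phiAux Y h) s₂ := by
    refine (continuousOn_const (c := (0 : ℂ))).congr ?_
    rintro x (hx | ⟨v, hv, rfl⟩)
    · rw [show x = ∞ from hx]
      simp [phiAux]
    · exact hΦzero v hv
  set s : Set (OnePoint E0) := s₁ ∪ s₂ with hsdef
  have hscl : IsClosed s := hs1cl.union hs2cl
  have hΦs : ContinuousOn (phiAux Y h) s :=
    continuousOn_union_of_isClosed' hs1cl hs2cl hΦs1 hΦs2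
  -- Tietze extension
  set φ : C(↥s, ℂ) := ⟨s.restrict (phiAux Y h), continuousOn_iff_continuous_restrict.mp hΦs⟩
    with hφdef
  obtain ⟨G, hG⟩ := ContinuousMap.exists_restrict_eq hscl φ
  have hGeq : ∀ x ∈ s, G x = phiAux Y h x := by
    intro x hx
    have := congrFun (congrArg DFunLike.coe hG) ⟨x, hx⟩
    exact this
  have hGinf : G ∞ = 0 := by
    have := hGeq ∞ (Or.inl (Or.inl rfl))
    simpa [phiAux] using this
  -- the functions f and g
  refine ⟨fun v => h (Glue.inl v) - G ↑v, fun v => G ↑v, ?_, ?_, ?_, ?_, ?_, ?_, ?_⟩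
  · exact hinlC.sub (G.continuous.comp OnePoint.continuous_coe)
  · exact G.continuous.comp OnePoint.continuous_coe
  · have hg0 : Filter.Tendsto (fun v : E0 => G ↑v) (Filter.cocompact E0) (nhds 0) := by
      have h1 : Filter.Tendsto (fun v : E0 => (v : OnePoint E0)) (Filter.cocompact E0)
          (nhds ∞) := OnePoint.tendsto_coe_infty.mono_left Filter.cocompact_le_coclosedCompact
      have := (G.continuous.tendsto ∞).comp h1
      rwa [hGinf] at this
    simpa using hinl0.sub hg0
  · have h1 : Filter.Tendsto (fun v : E0 => (v : OnePoint E0)) (Filter.cocompact E0)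
        (nhds ∞) := OnePoint.tendsto_coe_infty.mono_left Filter.cocompact_le_coclosedCompact
    have := (G.continuous.tendsto ∞).comp h1
    rwa [hGinf] at this
  · intro v hv
    have hmem : (v : OnePoint E0) ∈ s := Or.inr (Or.inr ⟨v, hv, rfl⟩)
    show G (↑v : OnePoint E0) = 0
    rw [hGeq _ hmem]
    exact hΦzero v hv
  · intro v
    ring
  · intro v hv
    have hmem : (v : OnePoint E0) ∈ s := Or.inl (Or.inr ⟨v, subset_closure hv, rfl⟩)
    show h (Glue.inr ⟨v, subset_closure hv⟩) = h (Glue.inl v) - G (↑v : OnePoint E0)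
    rw [hGeq _ hmem]
    simp [phiAux, dif_pos (subset_closure hv)]


end TopGraphAux
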